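/- Let α ∈ [1.5706, π/2] and let y be a slowly oscillating periodic solution of Wright's equation y'(t) = -α y(t-1)(1+y(t)) with ‖y‖_∞ ≤ e^{0.04} - 1, normalized so that y(0) = 0, y < 0 on (-t₋, 0) and y > 0 on (0, t₊). If t₊ ≥ 2, then t₊ < 2 + 1/α. -/

import Mathlib

/-- For a slowly oscillating periodic solution of Wright's equation with
`α ∈ [1.5706, π/2]` and `‖y‖_∞ ≤ e^{0.04} - 1`, normalized so that `y 0 = 0`,
`y < 0` on `(-t₋, 0)` and `y > 0` on `(0, t₊)`: if `t₊ ≥ 2`, then `t₊ < 2 + 1/α`. -/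
theorem sops_tplus_bound (α : ℝ) (hα0 : 1.5706 ≤ α) (hα1 : α ≤ Real.pi / 2)
    (y : ℝ → ℝ) (hy : ContDiff ℝ 1 y)
    (hode : ∀ t, deriv y t = -α * y (t - 1) * (1 + y t))
    (hbound : ∀ t, |y t| ≤ Real.exp 0.04 - 1)
    (tm tp : ℝ) (htm : 1 < tm) (htp : 1 < tp)
    (hper : Function.Periodic y (tm + tp))
    (hy0 : y 0 = 0)
    (hneg : ∀ t ∈ Set.Ioo (-tm) (0 : ℝ), y t < 0)
    (hpos : ∀ t ∈ Set.Ioo (0 : ℝ) tp, 0 < y t)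
    (h2 : 2 ≤ tp) :
    tp < 2 + 1 / α := by
  by_contra hcon
  push_neg at hcon
  have hα : (0:ℝ) < α := by linarith
  have hαinv : (0:ℝ) < 1/α := by positivity
  have hαinv1 : 1/α < 1 := by
    rw [div_lt_one hα]; linarith
  -- 1 + y t > 0 everywhere
  have hexp : Real.exp 0.04 < 2 := by
    have hl : (0.04:ℝ) < Real.log 2 := by
      have := Real.log_two_gt_d9; linarith
    calc Real.exp 0.04 < Real.exp (Real.log 2) := Real.exp_lt_exp.mpr hl
      _ = 2 := Real.exp_log (by norm_num)
  have hb : ∀ t, 0 < 1 + y t := by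
    intro t
    have h1 : |y t| < 1 := lt_of_le_of_lt (hbound t) (by linarith)
    have := abs_lt.mp h1
    linarith [this.1]
  have h2lt : 2 < tp := by linarith
  -- y strictly decreasing on [1, tp]
  have hanti : StrictAntiOn y (Set.Icc 1 tp) := by
    apply strictAntiOn_of_deriv_neg (convex_Icc 1 tp) hy.continuous.continuousOn
    intro t ht
    rw [interior_Icc] at ht
    rw [hode t]
    have h1 : 0 < y (t - 1) := hpos _ ⟨by linarith [ht.1], by linarith [ht.2]⟩
    have h2' := hb t
    nlinarith [mul_pos (mul_pos hα h1) h2']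
  set s : ℝ := 1 + 1/α with hs
  have hs2 : s < 2 := by simp only [hs]; linarith
  have hs1 : (1:ℝ) ≤ s := by rw [hs]; linarith
  have hsmem : s ∈ Set.Icc (1:ℝ) tp := ⟨hs1, by linarith⟩
  have h2mem : (2:ℝ) ∈ Set.Icc (1:ℝ) tp := ⟨by norm_num, by linarith⟩
  have hy2pos : 0 < y 2 := hpos 2 ⟨by norm_num, h2lt⟩
  set c : ℝ := y s with hc
  have hcy2 : y 2 < c := hanti hsmem h2mem hs2
  -- auxiliary function g t = y t + α c t is antitone on [2, 2+1/α]
  have hder : ∀ t : ℝ, HasDerivAt (fun t => y t + α * c * t) (deriv y t + α * c) t := by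
    intro t
    have h1 : HasDerivAt y (deriv y t) t :=
      (hy.differentiable one_ne_zero t).hasDerivAt
    have h2' : HasDerivAt (fun t : ℝ => α * c * t) (α * c) t := by
      simpa using (hasDerivAt_id t).const_mul (α * c)
    exact h1.add h2'
  have hganti : AntitoneOn (fun t => y t + α * c * t) (Set.Icc 2 (2 + 1/α)) := by
    apply antitoneOn_of_deriv_nonpos (convex_Icc 2 (2 + 1/α))
    · exact (Continuous.add hy.continuous (by continuity)).continuousOn
    · intro t ht
      exact (hder t).differentiableAt.differentiableWithinAt
    · intro t ht
      rw [interior_Icc] at ht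
      rw [(hder t).deriv, hode t]
      have ht1 : y s < y (t - 1) := by
        apply hanti ⟨by linarith [ht.1], by linarith [ht.2]⟩ hsmem
        simp only [hs]; linarith [ht.2]
      have hytpos : 0 < y t := hpos t ⟨by linarith [ht.1], by linarith [ht.2]⟩
      have hcpos : 0 < c := lt_trans hy2pos hcy2
      have ht1' : c < y (t - 1) := ht1
      nlinarith [mul_lt_mul_of_pos_left ht1' hα,
        mul_pos (mul_pos hα (lt_trans hcpos ht1')) hytpos]
  have hkey : y (2 + 1/α) + α * c * (2 + 1/α) ≤ y 2 + α * c * 2 :=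
    hganti ⟨le_refl 2, by linarith⟩ ⟨by linarith, le_refl _⟩ (by linarith)
  have hcc : α * c * (1/α) = c := by field_simp
  have hyneg : y (2 + 1/α) < 0 := by nlinarith
  -- but y (2 + 1/α) ≥ 0
  have hynn : 0 ≤ y (2 + 1/α) := by
    rcases lt_or_eq_of_le hcon with h | h
    · exact (hpos _ ⟨by linarith, h⟩).le
    · rw [h]
      have htend : Filter.Tendsto y (nhdsWithin tp (Set.Iio tp)) (nhds (y tp)) :=
        (hy.continuous.tendsto tp).mono_left nhdsWithin_le_nhds
      have hmem : Set.Ioo (0:ℝ) tp ∈ nhdsWithin tp (Set.Iio tp) :=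
        Ioo_mem_nhdsLT_of_mem ⟨by linarith, le_refl tp⟩
      exact ge_of_tendsto htend (by filter_upwards [hmem] with t ht using (hpos t ht).le)
  linarith
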